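/- Without the learning channel, the equilibrium coefficient of a dogmatic mutant with correct elasticity r° but perceived correlation κ, playing against a rational best responder, is α_BA(κ) = γ(1 + r° − (1/2)ψ(κ)r°) / (1 + 2r° + (r°)² − (1/4)ψ(κ)ψ(κ°)(r°)²), i.e. the unique solution of x = (γ − (1/2)r°ψ(κ)·(γ − (1/2)r°ψ(κ°)x)/(1+r°))/(1+r°). Its derivative in ψ(κ) at ψ(κ) = ψ(κ°) has the sign of (1/4)r°(1+r°)γ(−2(1+r°) + ψ(κ°)r°), which is strictly negative for γ > 0, r° > 0, ψ(κ°) ∈ (0,1]. -/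

import Mathlib

/-- without the learning channel, a dogmatic mutant with correct elasticity r°
and perceived correlation coefficient ψ(κ) has the unique equilibrium coefficient
α_BA = γ(1 + r° − (1/2)ψ(κ)r°)/(1 + 2r° + r°² − (1/4)ψ(κ)ψ(κ°)r°²) against a rational
best responder; its derivative in ψ(κ) at ψ(κ)=ψ(κ°) has the sign of
(1/4)r°(1+r°)γ(−2(1+r°)+ψ(κ°)r°), which is strictly negative. -/
theorem no_learning_coefficient (γ r ψ0 : ℝ) (hγ : 0 < γ) (hr : 0 < r)
    (hψ0 : ψ0 ∈ Set.Ioc (0:ℝ) 1)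
    (αBA : ℝ → ℝ)
    (hα : ∀ ψv, αBA ψv = γ * (1 + r - (1/2) * ψv * r)
        / (1 + 2*r + r^2 - (1/4) * ψv * ψ0 * r^2)) :
    (∀ ψv ∈ Set.Ioc (0:ℝ) 1, ∀ x : ℝ,
      x = (γ - (1/2) * r * ψv * ((γ - (1/2) * r * ψ0 * x) / (1 + r))) / (1 + r)
        ↔ x = αBA ψv) ∧
    (∃ c : ℝ, 0 < c ∧
      deriv αBA ψ0 = c * ((1/4) * r * (1 + r) * γ * (-2 * (1 + r) + ψ0 * r))) ∧
    (1/4) * r * (1 + r) * γ * (-2 * (1 + r) + ψ0 * r) < 0 ∧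
    deriv αBA ψ0 < 0 := by
  obtain ⟨hψ0pos, hψ0le⟩ := hψ0
  have hr1 : (0:ℝ) < 1 + r := by linarith
  have hDpos : ∀ ψv ∈ Set.Ioc (0:ℝ) 1,
      0 < 1 + 2*r + r^2 - (1/4) * ψv * ψ0 * r^2 := by
    rintro ψv ⟨h1, h2⟩
    have h12 : ψv * ψ0 ≤ 1 := by nlinarith
    nlinarith [mul_nonneg (sub_nonneg.mpr h12) (sq_nonneg r)]
  have hD0pos : 0 < 1 + 2*r + r^2 - (1/4) * ψ0 * ψ0 * r^2 :=
    hDpos ψ0 ⟨hψ0pos, hψ0le⟩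
  constructor
  · rintro ψv hψv x
    have hD := (hDpos ψv hψv).ne'
    have hrw : (γ - (1/2) * r * ψv * ((γ - (1/2) * r * ψ0 * x) / (1 + r)))
        = (γ * (1 + r) - (1/2) * r * ψv * (γ - (1/2) * r * ψ0 * x)) / (1 + r) := by
      field_simp
    rw [hα ψv, hrw, div_div, eq_div_iff (by positivity : (1+r)*(1+r) ≠ 0),
      eq_div_iff hD]
    constructor <;> intro h <;> linear_combination h
  · -- derivative
    set D0 : ℝ := 1 + 2*r + r^2 - (1/4) * ψ0 * ψ0 * r^2 with hD0
    have hNder : HasDerivAt (fun ψv : ℝ => γ * (1 + r - (1/2) * ψv * r))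
        (-(γ * r / 2)) ψ0 := by
      have h := ((hasDerivAt_id ψ0).const_mul (-(γ * r / 2))).const_add (γ * (1 + r))
      convert h using 1
      · rfl
      · rfl
      · funext ψv; simp only [id_eq]; ring
      · simp
    have hDder : HasDerivAt (fun ψv : ℝ => 1 + 2*r + r^2 - (1/4) * ψv * ψ0 * r^2)
        (-(ψ0 * r^2 / 4)) ψ0 := by
      have h := ((hasDerivAt_id ψ0).const_mul (-(ψ0 * r^2 / 4))).const_add (1 + 2*r + r^2)
      convert h using 1
      · rfl
      · rfl
      · funext ψv; simp only [id_eq]; ring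
      · simp
    have hder : HasDerivAt αBA
        ((-(γ * r / 2) * D0 - γ * (1 + r - (1/2) * ψ0 * r) * (-(ψ0 * r^2 / 4))) / D0^2)
        ψ0 := by
      have h := hNder.div hDder hD0pos.ne'
      have hfun : αBA = fun ψv => γ * (1 + r - (1/2) * ψv * r)
          / (1 + 2*r + r^2 - (1/4) * ψv * ψ0 * r^2) := funext hα
      rw [hfun]
      exact h
    have hderiv : deriv αBA ψ0 =
        (-(γ * r / 2) * D0 - γ * (1 + r - (1/2) * ψ0 * r) * (-(ψ0 * r^2 / 4))) / D0^2 :=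
      hder.deriv
    have hnum : -(γ * r / 2) * D0 - γ * (1 + r - (1/2) * ψ0 * r) * (-(ψ0 * r^2 / 4))
        = (1/4) * r * (1 + r) * γ * (-2 * (1 + r) + ψ0 * r) := by
      rw [hD0]; ring
    have hneg : (1/4) * r * (1 + r) * γ * (-2 * (1 + r) + ψ0 * r) < 0 := by
      have h1 : -2 * (1 + r) + ψ0 * r < 0 := by nlinarith
      exact mul_neg_of_pos_of_neg (by positivity) h1
    refine ⟨⟨1 / D0^2, by positivity, ?_⟩, hneg, ?_⟩
    · rw [hderiv, hnum]; ring
    · rw [hderiv, hnum]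
      exact div_neg_of_neg_of_pos hneg (by positivity)
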